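/- arXiv:1703.01538 — 5 statements merged into one kernel-verified Lean document; each statement's English description precedes it below -/
import Mathlib

section
/- Let f : [a,b] → ℝ be convex on an open interval containing [a,b], with f' integrable on [a,b]. If f(a)·f(b) > 0 and ∫_a^b f(t) dt = 0, then f(a)·f(b) ≤ ((b-a)/12) · ∫_a^b (f'(x))² dx. -/
open MeasureTheory Set

lemma cs_interval (a b : ℝ) (hab : a ≤ b) (g h : ℝ → ℝ)
    (hgc : Continuous g)
    (hh : IntervalIntegrable h volume a b)
    (hh2 : IntervalIntegrable (fun x => (h x) ^ 2) volume a b) :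
    (∫ x in a..b, g x * h x) ^ 2 ≤
      (∫ x in a..b, (g x) ^ 2) * ∫ x in a..b, (h x) ^ 2 := by
  set K := ∫ x in a..b, (g x) ^ 2 with hK
  set I := ∫ x in a..b, g x * h x with hI
  set J := ∫ x in a..b, (h x) ^ 2 with hJ
  have hgh : IntervalIntegrable (fun x => g x * h x) volume a b :=
    hh.continuousOn_mul hgc.continuousOn
  have hg2 : IntervalIntegrable (fun x => (g x) ^ 2) volume a b :=
    (hgc.pow 2).intervalIntegrable a b
  have key : ∀ t : ℝ, 0 ≤ J * (t * t) + 2 * I * t + K := by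
    intro t
    have expand : ∫ x in a..b, (t * h x + g x) ^ 2 = J * (t * t) + 2 * I * t + K := by
      have e1 : ∀ x, (t * h x + g x) ^ 2 =
          (t * t) * (h x) ^ 2 + (2 * t) * (g x * h x) + (g x) ^ 2 := by
        intro x; ring
      rw [intervalIntegral.integral_congr (g := fun x =>
          (t * t) * (h x) ^ 2 + (2 * t) * (g x * h x) + (g x) ^ 2) (fun x _ => e1 x)]
      rw [intervalIntegral.integral_add ((hh2.const_mul _).add (hgh.const_mul _)) hg2,
        intervalIntegral.integral_add (hh2.const_mul _) (hgh.const_mul _),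
        intervalIntegral.integral_const_mul, intervalIntegral.integral_const_mul]
      ring
    rw [← expand]
    exact intervalIntegral.integral_nonneg hab (fun x _ => sq_nonneg _)
  have hd := discrim_le_zero key
  rw [discrim] at hd
  nlinarith [hd]

theorem alzer_convex (a b c d : ℝ) (hab : a < b) (hca : c < a) (hbd : b < d)
    (f f' : ℝ → ℝ)
    (hconv : ConvexOn ℝ (Set.Ioo c d) f)
    (hderiv : ∀ x ∈ Set.Ioo c d, HasDerivAt f (f' x) x)
    (hint : IntervalIntegrable f' volume a b)
    (hint2 : IntervalIntegrable (fun x => (f' x) ^ 2) volume a b)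
    (hpos : f a * f b > 0)
    (hzero : (∫ t in a..b, f t) = 0) :
    f a * f b ≤ (b - a) / 12 * ∫ x in a..b, (f' x) ^ 2 := by
  have hab' : a ≤ b := hab.le
  set m : ℝ := (a + b) / 2 with hm
  have hsub : Set.uIcc a b ⊆ Set.Ioo c d := by
    rw [Set.uIcc_of_le hab']
    intro x hx
    exact ⟨hca.trans_le hx.1, lt_of_le_of_lt hx.2 hbd⟩
  have hfc : ContinuousOn f (Set.uIcc a b) := fun x hx =>
    ((hderiv x (hsub hx)).continuousAt).continuousWithinAt
  have huc : ContinuousOn (fun x => x - m) (Set.uIcc a b) :=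
    (continuous_id.sub continuous_const).continuousOn
  -- integration by parts
  have hibp : ∫ x in a..b, (x - m) * f' x
      = (b - m) * f b - (a - m) * f a - ∫ x in a..b, 1 * f x := by
    apply intervalIntegral.integral_mul_deriv_eq_deriv_mul_of_hasDerivAt huc hfc
    · intro x hx
      exact (hasDerivAt_id x).sub_const m
    · intro x hx
      rw [min_eq_left hab', max_eq_right hab'] at hx
      exact hderiv x ⟨hca.trans hx.1, hx.2.trans hbd⟩
    · exact intervalIntegrable_const
    · exact hint
  have hsimp : (∫ x in a..b, 1 * f x) = 0 := by
    simpa using hzero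
  have hibp2 : ∫ x in a..b, (x - m) * f' x = (b - a) / 2 * (f a + f b) := by
    rw [hibp, hsimp, hm]; ring
  -- compute ∫ (x-m)^2
  have hsq : (∫ x in a..b, (x - m) ^ 2) = (b - a) ^ 3 / 12 := by
    have h1 : (∫ x in a..b, (x - m) ^ 2) = ∫ x in (a - m)..(b - m), x ^ 2 := by
      rw [← intervalIntegral.integral_comp_sub_right (fun x => x ^ 2) m]
    rw [h1, integral_pow]
    rw [hm]; ring
  have hcs := cs_interval a b hab' (fun x => x - m) f'
    (continuous_id.sub continuous_const) hint hint2
  rw [hibp2, hsq] at hcs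
  have hba : (0:ℝ) < b - a := sub_pos.2 hab
  nlinarith [hcs, sq_nonneg (f a - f b), mul_pos hba hba, sq_nonneg ((f a + f b) * (b-a))]
end

section
/- The constant 1/12 in the inequality f(a)·f(b) ≤ C·(b-a)·∫_a^b f'² is best possible: for f(x) = 6x² − 6x + 1 on [0,1], f is convex, ∫_0^1 f = 0, f(0) = f(1) = 1, and ∫_0^1 (f'(x))² dx = 12, so f(0)f(1) = (1/12)·∫_0^1 f'². -/
open MeasureTheory Set

theorem alzer_convex_sharp :
    let f : ℝ → ℝ := fun x => 6 * x ^ 2 - 6 * x + 1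
    ConvexOn ℝ (Set.Icc (0:ℝ) 1) f ∧
    (∫ x in (0:ℝ)..1, f x) = 0 ∧
    f 0 = 1 ∧ f 1 = 1 ∧
    (∫ x in (0:ℝ)..1, (6 * (2 * x - 1)) ^ 2) = 12 ∧
    f 0 * f 1 = 1 / 12 * ∫ x in (0:ℝ)..1, (6 * (2 * x - 1)) ^ 2 := by
  intro f
  have hconv : ConvexOn ℝ (Set.Icc (0:ℝ) 1) f := by
    refine ⟨convex_Icc 0 1, ?_⟩
    intro x _ y _ a b ha hb hab
    simp only [f, smul_eq_mul]
    nlinarith [mul_nonneg ha hb, sq_nonneg (x - y)]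
  have h1 : (∫ x in (0:ℝ)..1, f x) = 0 := by
    simp only [f]
    have i1 : IntervalIntegrable (fun x : ℝ => 6 * x ^ 2) volume 0 1 :=
      (intervalIntegral.intervalIntegrable_pow 2).const_mul 6
    have i2 : IntervalIntegrable (fun x : ℝ => 6 * x) volume 0 1 :=
      intervalIntegral.intervalIntegrable_id.const_mul 6
    rw [intervalIntegral.integral_add (i1.sub i2) (_root_.intervalIntegrable_const (c := (1:ℝ))),
      intervalIntegral.integral_sub i1 i2, intervalIntegral.integral_const_mul, intervalIntegral.integral_const_mul,
      integral_pow, integral_id]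
    norm_num
  have h2 : (∫ x in (0:ℝ)..1, (6 * (2 * x - 1)) ^ 2) = 12 := by
    have h : ∀ x : ℝ, (6 * (2 * x - 1)) ^ 2 = 144 * x ^ 2 - 144 * x + 36 := by intro x; ring
    simp only [h]
    have i1 : IntervalIntegrable (fun x : ℝ => 144 * x ^ 2) volume 0 1 :=
      (intervalIntegral.intervalIntegrable_pow 2).const_mul 144
    have i2 : IntervalIntegrable (fun x : ℝ => 144 * x) volume 0 1 :=
      intervalIntegral.intervalIntegrable_id.const_mul 144
    rw [intervalIntegral.integral_add (i1.sub i2) (_root_.intervalIntegrable_const (c := (36:ℝ))),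
      intervalIntegral.integral_sub i1 i2, intervalIntegral.integral_const_mul, intervalIntegral.integral_const_mul,
      integral_pow, integral_id]
    norm_num
  refine ⟨hconv, h1, by norm_num [f], by norm_num [f], h2, ?_⟩
  rw [h2]; norm_num [f]
end

section
/- Let f : [a,b] → ℝ be convex and differentiable with f' square-integrable, f(a)·f(b) > 0 and ∫_a^b f = 0. Then the geometric mean satisfies √(f(a)·f(b)) ≤ √((b-a)/12) · (∫_a^b (f'(x))² dx)^{1/2}. -/
open MeasureTheory Set

theorem alzer_geometric_mean (a b c d : ℝ) (hab : a < b) (hca : c < a) (hbd : b < d)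
    (f f' : ℝ → ℝ)
    (hconv : ConvexOn ℝ (Set.Ioo c d) f)
    (hderiv : ∀ x ∈ Set.Ioo c d, HasDerivAt f (f' x) x)
    (hint2 : IntervalIntegrable (fun x => (f' x) ^ 2) volume a b)
    (hpos : f a * f b > 0)
    (hzero : (∫ t in a..b, f t) = 0) :
    Real.sqrt (f a * f b) ≤
      Real.sqrt ((b - a) / 12) * (∫ x in a..b, (f' x) ^ 2) ^ ((1 : ℝ) / 2) := by
  set m : ℝ := (a + b) / 2 with hm
  have hsub : Icc a b ⊆ Ioo c d := fun x hx => ⟨hca.trans_le hx.1, hx.2.trans_lt hbd⟩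
  have huIcc : uIcc a b = Icc a b := uIcc_of_le hab.le
  -- continuity of f on [a,b]
  have hcont : ContinuousOn f (Icc a b) := fun x hx =>
    ((hderiv x (hsub hx)).continuousAt).continuousWithinAt
  have hfint : IntervalIntegrable f volume a b := by
    rw [intervalIntegrable_iff_integrableOn_Icc_of_le hab.le]
    exact hcont.integrableOn_Icc
  -- monotonicity and integrability of f'
  have hmono : MonotoneOn f' (Icc a b) := by
    have h1 : MonotoneOn (deriv f) (Ioo c d) :=
      hconv.monotoneOn_deriv (fun x hx => (hderiv x hx).differentiableAt)
    intro x hx y hy hxy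
    rw [← (hderiv x (hsub hx)).deriv, ← (hderiv y (hsub hy)).deriv]
    exact h1 (hsub hx) (hsub hy) hxy
  have hf'int : IntervalIntegrable f' volume a b := by
    apply MonotoneOn.intervalIntegrable
    rwa [huIcc]
  -- both endpoint values are positive
  have hfa : 0 < f a := by
    by_contra h
    push_neg at h
    have hb : f b < 0 := by nlinarith
    have ha : f a < 0 := by nlinarith
    have hM : max (f a) (f b) < 0 := max_lt ha hb
    have hle : ∀ x ∈ Icc a b, f x ≤ max (f a) (f b) := by
      intro x hx
      have := hconv.le_on_segment (hsub (left_mem_Icc.2 hab.le))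
        (hsub (right_mem_Icc.2 hab.le)) (by rwa [segment_eq_Icc hab.le])
      exact this
    have hmono2 : (∫ t in a..b, f t) ≤ ∫ _t in a..b, max (f a) (f b) :=
      intervalIntegral.integral_mono_on hab.le hfint intervalIntegrable_const hle
    rw [hzero, intervalIntegral.integral_const, smul_eq_mul] at hmono2
    nlinarith
  have hfb : 0 < f b := by nlinarith
  -- integration by parts
  have hparts : ∫ x in a..b, f x * 1 =
      f b * (b - m) - f a * (a - m) - ∫ x in a..b, f' x * (x - m) := by
    apply intervalIntegral.integral_mul_deriv_eq_deriv_mul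
    · intro x hx; rw [huIcc] at hx; exact hderiv x (hsub hx)
    · intro x hx; exact (hasDerivAt_id x).sub_const m
    · exact hf'int
    · exact intervalIntegrable_const
  simp only [mul_one, hzero] at hparts
  have hkey : (∫ x in a..b, f' x * (x - m)) = (b - a) / 2 * (f a + f b) := by
    have : f b * (b - m) - f a * (a - m) = (b - a) / 2 * (f a + f b) := by
      rw [hm]; ring
    linarith [hparts, this]
  -- Hölder (Cauchy–Schwarz) on Ioc a b
  set μ : Measure ℝ := volume.restrict (Ioc a b) with hμ
  have measf' : AEStronglyMeasurable f' μ := hf'int.1.aestronglyMeasurable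
  have sq_abs_rpow : ∀ x : ℝ, |x| ^ (2 : ℝ) = x ^ 2 := by
    intro x
    rw [show (2 : ℝ) = ((2 : ℕ) : ℝ) by norm_num, Real.rpow_natCast, sq_abs]
  have hmemf : MemLp (fun x => |f' x|) (ENNReal.ofReal 2) μ := by
    rw [show ENNReal.ofReal 2 = 2 by simp]
    refine (memLp_two_iff_integrable_sq measf'.norm).2 ?_
    have : Integrable (fun x => (f' x) ^ 2) μ := hint2.1
    exact this.congr (Filter.Eventually.of_forall fun x => (sq_abs _).symm)
  have contg : Continuous fun x : ℝ => |x - m| := (continuous_id.sub continuous_const).abs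
  have hmemg : MemLp (fun x : ℝ => |x - m|) (ENNReal.ofReal 2) μ := by
    rw [show ENNReal.ofReal 2 = 2 by simp]
    refine (memLp_two_iff_integrable_sq contg.aestronglyMeasurable.restrict).2 ?_
    have : IntervalIntegrable (fun x => |x - m| ^ 2) volume a b :=
      (contg.pow 2).intervalIntegrable a b
    exact this.1
  have hpq : Real.HolderConjugate 2 2 := Real.HolderConjugate.two_two
  have holder := MeasureTheory.integral_mul_le_Lp_mul_Lq_of_nonneg hpq
    (Filter.Eventually.of_forall fun x => abs_nonneg (f' x))
    (Filter.Eventually.of_forall fun x => abs_nonneg (x - m)) hmemf hmemg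
  -- rewrite rpow squares
  have h1 : (∫ x, |f' x| ^ (2:ℝ) ∂μ) = ∫ x, (f' x) ^ 2 ∂μ := by
    congr 1; funext x; exact sq_abs_rpow _
  have h2 : (∫ x, |x - m| ^ (2:ℝ) ∂μ) = ∫ x, (x - m) ^ 2 ∂μ := by
    congr 1; funext x; exact sq_abs_rpow _
  rw [h1, h2] at holder
  -- bound ∫ f' (x-m) by ∫ |f'| |x-m|
  have habs : (∫ x, f' x * (x - m) ∂μ) ≤ ∫ x, |f' x| * |x - m| ∂μ :=
    le_trans (le_abs_self _) (by
      simpa [Real.norm_eq_abs, abs_mul] using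
        MeasureTheory.norm_integral_le_integral_norm (μ := μ) (fun x => f' x * (x - m)))
  -- value of ∫ (x-m)^2
  have hT : (∫ x, (x - m) ^ 2 ∂μ) = (b - a) ^ 3 / 12 := by
    have : (∫ x in a..b, (x - m) ^ 2) = (b - a) ^ 3 / 12 := by
      rw [intervalIntegral.integral_comp_sub_right (fun x : ℝ => x ^ 2) m,
        integral_pow]
      rw [hm]; ring
    rwa [intervalIntegral.integral_of_le hab.le] at this
  -- nonnegativity of ∫ f'^2
  have hSnn : 0 ≤ ∫ x, (f' x) ^ 2 ∂μ := integral_nonneg fun x => sq_nonneg _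
  have hba : (0:ℝ) < b - a := by linarith
  -- convert interval integrals
  have hconv1 : (∫ x in a..b, f' x * (x - m)) = ∫ x, f' x * (x - m) ∂μ :=
    intervalIntegral.integral_of_le hab.le
  have hconv2 : (∫ x in a..b, (f' x) ^ 2) = ∫ x, (f' x) ^ 2 ∂μ :=
    intervalIntegral.integral_of_le hab.le
  -- main inequality chain
  set S : ℝ := ∫ x, (f' x) ^ 2 ∂μ with hS
  have hTsqrt : ((b - a) ^ 3 / 12 : ℝ) ^ ((1:ℝ)/2) = (b - a) * Real.sqrt ((b - a) / 12) := by
    rw [← Real.sqrt_eq_rpow]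
    rw [show (b - a) ^ 3 / 12 = (b - a) ^ 2 * ((b - a) / 12) by ring,
      Real.sqrt_mul (sq_nonneg _), Real.sqrt_sq hba.le]
  have hmain : (b - a) / 2 * (f a + f b) ≤ S ^ ((1:ℝ)/2) * ((b - a) * Real.sqrt ((b - a) / 12)) := by
    calc (b - a) / 2 * (f a + f b) = ∫ x, f' x * (x - m) ∂μ := by rw [← hconv1, hkey]
      _ ≤ ∫ x, |f' x| * |x - m| ∂μ := habs
      _ ≤ S ^ ((1:ℝ)/2) * (∫ x, (x - m) ^ 2 ∂μ) ^ ((1:ℝ)/2) := by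
          exact holder
      _ = S ^ ((1:ℝ)/2) * ((b - a) * Real.sqrt ((b - a) / 12)) := by rw [hT, hTsqrt]
  have hdiv : (f a + f b) / 2 ≤ Real.sqrt ((b - a) / 12) * S ^ ((1:ℝ)/2) := by
    nlinarith [hmain, hba, Real.sqrt_nonneg ((b - a) / 12), Real.rpow_nonneg hSnn ((1:ℝ)/2)]
  have hgm : Real.sqrt (f a * f b) ≤ (f a + f b) / 2 := by
    have h : f a * f b ≤ ((f a + f b) / 2) ^ 2 := by nlinarith [sq_nonneg (f a - f b)]
    calc Real.sqrt (f a * f b) ≤ Real.sqrt (((f a + f b) / 2) ^ 2) := Real.sqrt_le_sqrt h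
      _ = (f a + f b) / 2 := Real.sqrt_sq (by positivity)
  rw [hconv2]
  exact hgm.trans hdiv
end

section
/- For any a < b, the quadratic function p(x) = 3((2x − a − b)/(b − a))² − 1 satisfies ∫_a^b p(x) dx = 0, p(a) = p(b) = max_{[a,b]} p = 2, and (max_{[a,b]} p)² = ((b-a)/12)·∫_a^b (p'(x))² dx, showing equality in the generalized Alzer inequality. -/
open MeasureTheory Set

lemma quad_integral (a b c2 c1 c0 : ℝ) :
    (∫ x in a..b, (c2 * x ^ 2 + c1 * x + c0)) =
      c2 * (b ^ 3 - a ^ 3) / 3 + c1 * (b ^ 2 - a ^ 2) / 2 + c0 * (b - a) := by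
  have h1 : IntervalIntegrable (fun x : ℝ => c2 * x ^ 2) volume a b := by
    apply Continuous.intervalIntegrable; continuity
  have h2 : IntervalIntegrable (fun x : ℝ => c1 * x) volume a b := by
    apply Continuous.intervalIntegrable; continuity
  have h3 : IntervalIntegrable (fun x : ℝ => (c0 : ℝ)) volume a b := by
    apply Continuous.intervalIntegrable; continuity
  rw [intervalIntegral.integral_add (h1.add h2) h3, intervalIntegral.integral_add h1 h2,
    intervalIntegral.integral_const_mul, intervalIntegral.integral_const_mul,
    integral_pow, integral_id, intervalIntegral.integral_const, smul_eq_mul]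
  push_cast
  ring

theorem alzer_extremal (a b : ℝ) (hab : a < b) :
    let p : ℝ → ℝ := fun x => 3 * ((2 * x - a - b) / (b - a)) ^ 2 - 1
    let p' : ℝ → ℝ := fun x => 12 * (2 * x - a - b) / (b - a) ^ 2
    (∫ x in a..b, p x) = 0 ∧
    p a = 2 ∧ p b = 2 ∧ (∀ x ∈ Set.Icc a b, p x ≤ 2) ∧
    (∫ x in a..b, (p' x) ^ 2) = 48 / (b - a) ∧
    (2 : ℝ) ^ 2 = (b - a) / 12 * ∫ x in a..b, (p' x) ^ 2 := by
  intro p p'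
  have hba : b - a ≠ 0 := sub_ne_zero.mpr hab.ne'
  have hI1 : (∫ x in a..b, p x) = 0 := by
    have hcg : ∀ x ∈ Set.uIcc a b, p x =
        (12 / (b - a) ^ 2) * x ^ 2 + (-(12 * (a + b)) / (b - a) ^ 2) * x
          + (3 * (a + b) ^ 2 / (b - a) ^ 2 - 1) := by
      intro x _
      show 3 * ((2 * x - a - b) / (b - a)) ^ 2 - 1 = _
      field_simp
      ring
    rw [intervalIntegral.integral_congr hcg, quad_integral]
    field_simp
    ring
  have hI2 : (∫ x in a..b, (p' x) ^ 2) = 48 / (b - a) := by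
    have hcg : ∀ x ∈ Set.uIcc a b, (p' x) ^ 2 =
        (576 / (b - a) ^ 4) * x ^ 2 + (-(576 * (a + b)) / (b - a) ^ 4) * x
          + 144 * (a + b) ^ 2 / (b - a) ^ 4 := by
      intro x _
      show (12 * (2 * x - a - b) / (b - a) ^ 2) ^ 2 = _
      field_simp
      ring
    rw [intervalIntegral.integral_congr hcg, quad_integral]
    field_simp
    ring
  refine ⟨hI1, ?_, ?_, ?_, hI2, ?_⟩
  · show 3 * ((2 * a - a - b) / (b - a)) ^ 2 - 1 = 2
    rw [show 2 * a - a - b = -(b - a) by ring]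
    field_simp
    ring
  · show 3 * ((2 * b - a - b) / (b - a)) ^ 2 - 1 = 2
    rw [show 2 * b - a - b = b - a by ring]
    field_simp
    norm_num
  · intro x hx
    show 3 * ((2 * x - a - b) / (b - a)) ^ 2 - 1 ≤ 2
    have h1 := hx.1
    have h2 := hx.2
    have key : (2 * x - a - b) ^ 2 ≤ (b - a) ^ 2 := by nlinarith
    have h3 : ((2 * x - a - b) / (b - a)) ^ 2 ≤ 1 := by
      rw [div_pow, div_le_one (by positivity)]
      exact key
    linarith
  · rw [hI2]
    field_simp
    ring
end

section
/- Let f be a continuously differentiable real function with period 2π such that ∫_0^{2π} f(x) dx = 0. Then (6/π)·max_{0 ≤ x ≤ 2π} f(x)² ≤ ∫_0^{2π} (f'(x))² dx. -/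
open MeasureTheory Set Real

/-- weight integral: `∫ s in a..b, (s - k)^2 = ((b-k)^3 - (a-k)^3)/3`. -/
lemma alzer_weight (a b k : ℝ) :
    (∫ s in a..b, (s - k) ^ 2) = ((b - k) ^ 3 - (a - k) ^ 3) / 3 := by
  have h := intervalIntegral.integral_comp_sub_right (a := a) (b := b) (fun x => x ^ 2) k
  rw [h, integral_pow]
  norm_num

/-- Cauchy–Schwarz for interval integrals (with positive weight norm). -/
lemma alzer_cs (a b : ℝ) (hab : a ≤ b) (u v : ℝ → ℝ) (hu : Continuous u)
    (hv : Continuous v) (hA : 0 < ∫ s in a..b, u s ^ 2) :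
    (∫ s in a..b, u s * v s) ^ 2 ≤ (∫ s in a..b, u s ^ 2) * ∫ s in a..b, v s ^ 2 := by
  set A := ∫ s in a..b, u s ^ 2 with hAdef
  set J := ∫ s in a..b, u s * v s with hJdef
  set K := ∫ s in a..b, v s ^ 2 with hKdef
  have key : 0 ≤ ∫ s in a..b, (J / A * u s - v s) ^ 2 :=
    intervalIntegral.integral_nonneg hab (fun _ _ => sq_nonneg _)
  have expand : (∫ s in a..b, (J / A * u s - v s) ^ 2)
      = (J / A) ^ 2 * A - 2 * (J / A) * J + K := by
    have h1 : ∀ s, (J / A * u s - v s) ^ 2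
        = (J / A) ^ 2 * u s ^ 2 - 2 * (J / A) * (u s * v s) + v s ^ 2 := by
      intro s; ring
    simp_rw [h1]
    rw [intervalIntegral.integral_add (f := fun s => (J / A) ^ 2 * u s ^ 2 - 2 * (J / A) * (u s * v s))
          (g := fun s => v s ^ 2) (((continuous_const.mul (hu.pow 2)).sub
          (continuous_const.mul (hu.mul hv))).intervalIntegrable a b)
        ((hv.pow 2).intervalIntegrable a b),
        intervalIntegral.integral_sub (f := fun s => (J / A) ^ 2 * u s ^ 2)
          (g := fun s => 2 * (J / A) * (u s * v s)) ((continuous_const.mul (hu.pow 2)).intervalIntegrable a b)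
          ((continuous_const.mul (hu.mul hv)).intervalIntegrable a b),
        intervalIntegral.integral_const_mul, intervalIntegral.integral_const_mul]
  rw [expand] at key
  have h2 : (J / A) ^ 2 * A - 2 * (J / A) * J = -(J ^ 2 / A) := by
    field_simp; ring
  rw [h2] at key
  have : J ^ 2 / A ≤ K := by linarith
  calc J ^ 2 = J ^ 2 / A * A := by field_simp
    _ ≤ K * A := mul_le_mul_of_nonneg_right this hA.le
    _ = A * K := mul_comm _ _

theorem alzer_original (f : ℝ → ℝ)
    (hf : ContDiff ℝ 1 f)
    (hper : Function.Periodic f (2 * π))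
    (hzero : (∫ x in (0:ℝ)..(2 * π), f x) = 0) :
    6 / π * sSup ((fun x => (f x) ^ 2) '' Set.Icc 0 (2 * π)) ≤
      ∫ x in (0:ℝ)..(2 * π), (deriv f x) ^ 2 := by
  have hπ : 0 < π := pi_pos
  set I := ∫ x in (0:ℝ)..(2 * π), (deriv f x) ^ 2 with hIdef
  have hcont : Continuous f := hf.continuous
  have hdiff : Differentiable ℝ f := hf.differentiable one_ne_zero
  have hd : ∀ x, HasDerivAt f (deriv f x) x := fun x => (hdiff x).hasDerivAt
  have hdc : Continuous (deriv f) := hf.continuous_deriv le_rfl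
  have hperd : Function.Periodic (deriv f) (2 * π) := by
    intro x
    have hfun : (fun y => f (y + 2 * π)) = f := funext fun y => hper y
    have : deriv (fun y => f (y + 2 * π)) x = deriv f (x + 2 * π) := by
      simpa [Function.comp_def] using ((hd (x + 2 * π)).comp x ((hasDerivAt_id x).add_const (2 * π))).deriv
    rw [hfun] at this
    exact this.symm
  have hInn : 0 ≤ I := intervalIntegral.integral_nonneg (by positivity) (fun _ _ => sq_nonneg _)
  -- pointwise bound
  have key : ∀ c : ℝ, (f c) ^ 2 ≤ π / 6 * I := by
    intro c
    have hp2 : Function.Periodic (fun x => (deriv f x) ^ 2) (2 * π) := fun x => by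
      simp [hperd x]
    have hIshift : (∫ x in (c - π)..(c + π), (deriv f x) ^ 2) = I := by
      have h := hp2.intervalIntegral_add_eq (c - π) 0
      have e1 : c - π + 2 * π = c + π := by ring
      rw [e1, zero_add] at h
      exact h
    have hfshift : (∫ x in (c - π)..(c + π), f x) = 0 := by
      have h := hper.intervalIntegral_add_eq (c - π) 0
      have e1 : c - π + 2 * π = c + π := by ring
      rw [e1, zero_add] at h
      rw [h]; exact hzero
    -- integration by parts on each half
    have ibp : ∀ a b k : ℝ, (∫ s in a..b, (s - k) * deriv f s)
        = (b - k) * f b - (a - k) * f a - ∫ s in a..b, f s := by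
      intro a b k
      have h := intervalIntegral.integral_mul_deriv_eq_deriv_mul (a := a) (b := b)
        (u := fun s => s - k) (u' := fun _ => (1:ℝ)) (v := f) (v' := deriv f)
        (fun x _ => (hasDerivAt_id x).sub_const k) (fun x _ => hd x)
        intervalIntegrable_const (hdc.intervalIntegrable a b)
      simpa using h
    set J₁ := ∫ s in (c - π)..c, (s - (c - π)) * deriv f s with hJ₁
    set J₂ := ∫ s in c..(c + π), (s - (c + π)) * deriv f s with hJ₂
    have hsplitf : (∫ s in (c - π)..c, f s) + (∫ s in c..(c + π), f s) = 0 := by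
      rw [intervalIntegral.integral_add_adjacent_intervals (hcont.intervalIntegrable _ _)
        (hcont.intervalIntegrable _ _)]
      exact hfshift
    have hJ1 : J₁ = π * f c - ∫ s in (c - π)..c, f s := by
      rw [hJ₁, ibp]; ring_nf
    have hJ2 : J₂ = π * f c - ∫ s in c..(c + π), f s := by
      rw [hJ₂, ibp]; ring_nf
    have hsum : J₁ + J₂ = 2 * π * f c := by
      rw [hJ1, hJ2]; linarith [hsplitf]
    -- Cauchy-Schwarz on each half
    have hA1 : (∫ s in (c - π)..c, (s - (c - π)) ^ 2) = π ^ 3 / 3 := by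
      rw [alzer_weight]; ring_nf
    have hA2 : (∫ s in c..(c + π), (s - (c + π)) ^ 2) = π ^ 3 / 3 := by
      rw [alzer_weight]; ring_nf
    set K₁ := ∫ s in (c - π)..c, (deriv f s) ^ 2 with hK₁
    set K₂ := ∫ s in c..(c + π), (deriv f s) ^ 2 with hK₂
    have hKsum : K₁ + K₂ = I := by
      rw [hK₁, hK₂, intervalIntegral.integral_add_adjacent_intervals (f := fun s => deriv f s ^ 2)
        ((hdc.pow 2).intervalIntegrable _ _) ((hdc.pow 2).intervalIntegrable _ _)]
      exact hIshift
    have hApos : (0:ℝ) < π ^ 3 / 3 := by positivity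
    have hcs1 : J₁ ^ 2 ≤ π ^ 3 / 3 * K₁ := by
      have := alzer_cs (c - π) c (by linarith) (fun s => s - (c - π)) (deriv f)
        (by continuity) hdc (by rw [hA1]; exact hApos)
      rwa [hA1] at this
    have hcs2 : J₂ ^ 2 ≤ π ^ 3 / 3 * K₂ := by
      have := alzer_cs c (c + π) (by linarith) (fun s => s - (c + π)) (deriv f)
        (by continuity) hdc (by rw [hA2]; exact hApos)
      rwa [hA2] at this
    have hsq : (2 * π * f c) ^ 2 ≤ 2 * (π ^ 3 / 3) * I := by
      rw [← hsum, ← hKsum]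
      nlinarith [sq_nonneg (J₁ - J₂)]
    nlinarith [sq_nonneg (f c), hπ, mul_pos hπ (mul_pos hπ hπ)]
  -- conclude via sSup
  set S := (fun x => (f x) ^ 2) '' Set.Icc 0 (2 * π) with hS
  have hne : S.Nonempty := ⟨(f 0) ^ 2, ⟨0, ⟨le_rfl, by positivity⟩, rfl⟩⟩
  have hbdd : ∀ y ∈ S, y ≤ π / 6 * I := by
    rintro y ⟨x, _, rfl⟩
    exact key x
  have hsup : sSup S ≤ π / 6 * I := csSup_le hne hbdd
  calc 6 / π * sSup S ≤ 6 / π * (π / 6 * I) :=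
        mul_le_mul_of_nonneg_left hsup (by positivity)
    _ = I := by field_simp
end
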